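/- The infimum over γ ∈ [0, d/3] of PR(d,γ) tends to 1 as d → ∞ (along positive integers d): for every ε > 0 there exists D such that for all integers d ≥ D and all real γ ∈ [0, d/3] one has PR(d,γ) > 1 − ε; combined with PR(d,0) = 1 this gives lim_{d→∞} inf_{γ∈[0,d/3]} PR(d,γ) = 1. Hence the gain from interpolation diminishes as the dimension grows. -/

import Mathlib

open Real Filter

/-- The performance ratio of interpolated-NN (interpolation level `γ`) to standard k-NN
in dimension `d`. -/
noncomputable def PR (d γ : ℝ) : ℝ :=
  (1 + γ ^ 2 / (d * (d - 2 * γ))) ^ ((4 : ℝ) / (d + 4)) *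
    ((d - γ) ^ 2 / (d + 2 - γ) ^ 2 * (d + 2) ^ 2 / d ^ 2) ^ (d / (d + 4))

/-- `PR d 0 = 1` for `d > 0`. -/
lemma PR_zero (d : ℝ) (hd : 0 < d) : PR d 0 = 1 := by
  have h1 : d ≠ 0 := ne_of_gt hd
  have h2 : d + 2 ≠ 0 := by positivity
  unfold PR
  have hB : (d - 0) ^ 2 / (d + 2 - 0) ^ 2 * (d + 2) ^ 2 / d ^ 2 = 1 := by
    field_simp
    ring
  rw [hB]
  norm_num

/-- The key uniform lower bound. -/
lemma PR_lb (d : ℕ) (hd : 2 ≤ d) (γ : ℝ) (h0 : 0 ≤ γ) (h3 : γ ≤ (d : ℝ) / 3) :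
    (1 - 1 / (d : ℝ)) ^ 2 ≤ PR (d : ℝ) γ := by
  set D := (d : ℝ) with hDdef
  have hD : (2 : ℝ) ≤ D := by rw [hDdef]; exact_mod_cast hd
  have hD0 : (0 : ℝ) < D := by linarith
  have hsub : 0 < D - 2 * γ := by linarith
  have hden : 0 < D + 2 - γ := by linarith
  have hDγ : 0 < D - γ := by linarith
  unfold PR
  set B := (D - γ) ^ 2 / (D + 2 - γ) ^ 2 * (D + 2) ^ 2 / D ^ 2 with hBdef
  have hBpos : 0 < B := by
    have h1 : 0 < (D - γ) ^ 2 := pow_pos hDγ 2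
    have h2 : 0 < (D + 2 - γ) ^ 2 := pow_pos hden 2
    have h3' : 0 < (D + 2) ^ 2 := by positivity
    have h4 : 0 < D ^ 2 := by positivity
    rw [hBdef]
    positivity
  have hBform : B = (1 - 2 * γ / ((D + 2 - γ) * D)) ^ 2 := by
    rw [hBdef]
    field_simp
    ring
  have ht0 : 0 ≤ 2 * γ / ((D + 2 - γ) * D) := by positivity
  have ht : 2 * γ / ((D + 2 - γ) * D) ≤ 1 / D := by
    rw [div_le_div_iff₀ (by positivity) hD0]
    nlinarith [mul_pos hD0 (show (0:ℝ) < D + 2 - 3 * γ by linarith)]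
  have h1d : (1 : ℝ) / D ≤ 1 / 2 := by
    rw [div_le_div_iff₀ hD0 two_pos]; linarith
  have hB1 : B ≤ 1 := by
    rw [hBform]; nlinarith
  have hlb : (1 - 1 / D) ^ 2 ≤ B := by
    rw [hBform]
    apply pow_le_pow_left₀ (by linarith) (by linarith) 2
  have he2 : D / (D + 4) ≤ 1 := by
    rw [div_le_one (by linarith)]; linarith
  have hBe : B ≤ B ^ (D / (D + 4)) := by
    calc B = B ^ (1 : ℝ) := (Real.rpow_one B).symm
      _ ≤ B ^ (D / (D + 4)) := Real.rpow_le_rpow_of_exponent_ge hBpos hB1 he2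
  have hA : 1 ≤ 1 + γ ^ 2 / (D * (D - 2 * γ)) := by
    have : 0 ≤ γ ^ 2 / (D * (D - 2 * γ)) := by positivity
    linarith
  have hAe : 1 ≤ (1 + γ ^ 2 / (D * (D - 2 * γ))) ^ ((4 : ℝ) / (D + 4)) := by
    calc (1 : ℝ) = 1 ^ ((4 : ℝ) / (D + 4)) := (Real.one_rpow _).symm
      _ ≤ _ := Real.rpow_le_rpow zero_le_one hA (by positivity)
  calc (1 - 1 / D) ^ 2 ≤ B := hlb
    _ ≤ B ^ (D / (D + 4)) := hBe
    _ = 1 * B ^ (D / (D + 4)) := (one_mul _).symm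
    _ ≤ _ := mul_le_mul_of_nonneg_right hAe (Real.rpow_nonneg hBpos.le _)

/-- For every `ε > 0` there exists `D` such that for all integers `d ≥ D`
and all real `γ ∈ [0, d/3]` one has `PR d γ > 1 − ε`; combined with `PR d 0 = 1` this
gives `lim_{d→∞} inf_{γ ∈ [0, d/3]} PR d γ = 1`: the gain from interpolation diminishes
as the dimension grows. -/
theorem PR_inf_tendsto_one :
    (∀ ε : ℝ, 0 < ε → ∃ D : ℕ, ∀ d : ℕ, D ≤ d →
      ∀ γ : ℝ, γ ∈ Set.Icc (0 : ℝ) ((d : ℝ) / 3) → 1 - ε < PR d γ) ∧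
    (∀ d : ℕ, 0 < d → PR (d : ℝ) 0 = 1) ∧
    Tendsto (fun d : ℕ => sInf ((fun γ : ℝ => PR d γ) '' Set.Icc (0 : ℝ) ((d : ℝ) / 3)))
      atTop (nhds 1) := by
  have key : ∀ ε : ℝ, 0 < ε → ∃ D : ℕ, ∀ d : ℕ, D ≤ d →
      ∀ γ : ℝ, γ ∈ Set.Icc (0 : ℝ) ((d : ℝ) / 3) → 1 - ε < PR d γ := by
    intro ε hε
    refine ⟨max 2 (⌈2 / ε⌉₊ + 1), fun d hd γ hγ => ?_⟩
    have hd2 : 2 ≤ d := le_trans (le_max_left _ _) hd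
    have hdc : ⌈2 / ε⌉₊ + 1 ≤ d := le_trans (le_max_right _ _) hd
    have hD0 : (0 : ℝ) < d := by positivity
    have hgt : 2 / ε < (d : ℝ) := by
      have h1 : (2 / ε : ℝ) ≤ ⌈2 / ε⌉₊ := Nat.le_ceil _
      have h2 : (⌈2 / ε⌉₊ : ℝ) < d := by exact_mod_cast hdc
      linarith
    have h2d : 2 / (d : ℝ) < ε := by
      rw [div_lt_iff₀ hD0]
      rw [div_lt_iff₀ hε] at hgt
      linarith
    have hlb := PR_lb d hd2 γ hγ.1 hγ.2
    have hsq : 1 - 2 / (d : ℝ) ≤ (1 - 1 / (d : ℝ)) ^ 2 := by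
      have h1 : (0 : ℝ) < 1 / (d : ℝ) := by positivity
      have he : (2 : ℝ) / d = 2 * (1 / (d : ℝ)) := by ring
      nlinarith [sq_nonneg (1 / (d : ℝ))]
    calc 1 - ε < 1 - 2 / (d : ℝ) := by linarith
      _ ≤ (1 - 1 / (d : ℝ)) ^ 2 := hsq
      _ ≤ PR d γ := hlb
  refine ⟨key, fun d hd => PR_zero d (by exact_mod_cast hd), ?_⟩
  have hlow : Tendsto (fun d : ℕ => (1 - 1 / (d : ℝ)) ^ 2) atTop (nhds 1) := by
    have h : Tendsto (fun d : ℕ => (1 - 1 / (d : ℝ)) ^ 2) atTop (nhds ((1 - 0) ^ 2)) :=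
      (tendsto_const_nhds.sub tendsto_one_div_atTop_nhds_zero_nat).pow 2
    norm_num at h
    simpa [one_div] using h
  apply tendsto_of_tendsto_of_tendsto_of_le_of_le' hlow tendsto_const_nhds
  · -- lower bound eventually
    filter_upwards [eventually_ge_atTop 2] with d hd2
    have hne : ((fun γ : ℝ => PR d γ) '' Set.Icc (0 : ℝ) ((d : ℝ) / 3)).Nonempty := by
      refine ⟨PR d 0, ⟨0, ⟨le_refl _, by positivity⟩, rfl⟩⟩
    apply le_csInf hne
    rintro x ⟨γ, hγ, rfl⟩
    exact PR_lb d hd2 γ hγ.1 hγ.2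
  · -- upper bound eventually
    filter_upwards [eventually_ge_atTop 2] with d hd2
    have hD0 : (0 : ℝ) < d := by positivity
    have hbdd : BddBelow ((fun γ : ℝ => PR d γ) '' Set.Icc (0 : ℝ) ((d : ℝ) / 3)) := by
      refine ⟨(1 - 1 / (d : ℝ)) ^ 2, ?_⟩
      rintro x ⟨γ, hγ, rfl⟩
      exact PR_lb d hd2 γ hγ.1 hγ.2
    have hmem : PR d 0 ∈ (fun γ : ℝ => PR d γ) '' Set.Icc (0 : ℝ) ((d : ℝ) / 3) :=
      ⟨0, ⟨le_refl _, by positivity⟩, rfl⟩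
    calc sInf _ ≤ PR d 0 := csInf_le hbdd hmem
      _ = 1 := PR_zero d hD0
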